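/- If a Markov chain with stationary probability distribution π is piecewise Harris and is also ϕ-irreducible, then it is Harris recurrent (and in fact the partition in the definition of piecewise Harris consists of a single piece equal to the whole state space). -/

import Mathlib

open MeasureTheory ProbabilityTheory Filter Set ENNReal

namespace MCMCHarris

variable {X : Type*} [MeasurableSpace X]

/-- The `n`-step transition kernel `P^n`. -/
noncomputable def iterK (P : Kernel X X) : ℕ → Kernel X X
  | 0 => Kernel.id
  | n + 1 => (iterK P n).comp P

/-- `hitLE P A n x` is the probability `P[τ_A ≤ n | X₀ = x]` that the chain started at `x`
hits `A` within the first `n` steps, where `τ_A = inf {n ≥ 1 : Xₙ ∈ A}`. -/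
noncomputable def hitLE (P : Kernel X X) (A : Set X) : ℕ → X → ℝ≥0∞
  | 0 => fun _ => 0
  | n + 1 => fun x => ∫⁻ y, (A.indicator (fun _ => 1) y + Aᶜ.indicator (hitLE P A n) y) ∂(P x)

/-- `hitProb P A x` is the probability `P[τ_A < ∞ | X₀ = x]`. -/
noncomputable def hitProb (P : Kernel X X) (A : Set X) (x : X) : ℝ≥0∞ :=
  ⨆ n, hitLE P A n x

/-- `stayLE P A n x` is the probability `P[X_k ∈ A for all 1 ≤ k ≤ n | X₀ = x]`. -/
noncomputable def stayLE (P : Kernel X X) (A : Set X) : ℕ → X → ℝ≥0∞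
  | 0 => fun _ => 1
  | n + 1 => fun x => ∫⁻ y, A.indicator (stayLE P A n) y ∂(P x)

/-- `stayProb P A x` is the probability `P[Xₙ ∈ A for all n ≥ 0 | X₀ = x]`. -/
noncomputable def stayProb (P : Kernel X X) (A : Set X) (x : X) : ℝ≥0∞ :=
  A.indicator (fun x' => ⨅ n, stayLE P A n x') x

/-- `ioProb P A x` is the probability `P[Xₙ ∈ A infinitely often | X₀ = x]`. -/
noncomputable def ioProb (P : Kernel X X) (A : Set X) (x : X) : ℝ≥0∞ :=
  ⨅ N, ∫⁻ y, hitProb P A y ∂(iterK P N x)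

/-- `pathProb P g` is the probability `P[Xₙ = g n for all n | X₀ = g 0]` that the chain
started at `g 0` follows the deterministic trajectory `g`. -/
noncomputable def pathProb (P : Kernel X X) (g : ℕ → X) : ℝ≥0∞ :=
  ⨅ N, ∏ n ∈ Finset.range N, P (g n) {g (n + 1)}

/-- Total variation distance between two measures. -/
noncomputable def tvDist (μ ν : Measure X) : ℝ :=
  ⨆ A : {A : Set X // MeasurableSet A}, |(μ A).toReal - (ν A).toReal|

/-- `π` is a stationary distribution for the kernel `P`. -/
def Stationary (P : Kernel X X) (π : Measure X) : Prop :=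
  ∀ A : Set X, MeasurableSet A → ∫⁻ x, P x A ∂π = π A

/-- The chain `P`, started from any point of `S`, is `φ`-irreducible. -/
def IrreducibleOn (P : Kernel X X) (φ : Measure X) (S : Set X) : Prop :=
  φ ≠ 0 ∧ ∀ x ∈ S, ∀ A : Set X, MeasurableSet A → 0 < φ A → 0 < hitProb P A x

/-- The chain `P` is `φ`-irreducible (from every point of `S`) for some nonzero σ-finite `φ`. -/
def PhiIrreducibleOn (P : Kernel X X) (S : Set X) : Prop :=
  ∃ φ : Measure X, SigmaFinite φ ∧ IrreducibleOn P φ S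

/-- Harris recurrence (for starting points in `S`): every set of positive `π`-measure is
reached in finite time with probability one from every `x ∈ S`. -/
def HarrisRecurrentOn (P : Kernel X X) (π : Measure X) (S : Set X) : Prop :=
  ∀ A : Set X, MeasurableSet A → 0 < π A → ∀ x ∈ S, hitProb P A x = 1

/-- There is a `D`-cycle: disjoint sets `C 0, …, C (D-1)` of positive `π`-measure through
which the chain cycles with probability one. -/
def HasCycle (P : Kernel X X) (π : Measure X) (D : ℕ) : Prop :=
  ∃ C : ℕ → Set X, (∀ i < D, MeasurableSet (C i)) ∧
    (∀ i < D, ∀ j < D, i ≠ j → Disjoint (C i) (C j)) ∧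
    (∀ i < D, 0 < π (C i)) ∧
    ∀ i < D, ∀ x ∈ C i, P x (C ((i + 1) % D)) = 1

/-- The period of the chain is `D`: `D` is the largest positive integer admitting a `D`-cycle. -/
def IsPeriod (P : Kernel X X) (π : Measure X) (D : ℕ) : Prop :=
  0 < D ∧ HasCycle P π D ∧ ∀ D' : ℕ, 0 < D' → HasCycle P π D' → D' ≤ D

/-- The chain is aperiodic: its period is `1`. -/
def Aperiodic (P : Kernel X X) (π : Measure X) : Prop :=
  IsPeriod P π 1

/-- The Cesàro average `(1/D) ∑_{r=1}^D P^{nD+r}(x, ·)`. -/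
noncomputable def cesaro (P : Kernel X X) (D n : ℕ) (x : X) : Measure X :=
  (D : ℝ≥0∞)⁻¹ • ∑ r ∈ Finset.range D, iterK P (n * D + (r + 1)) x

end MCMCHarris

namespace MCMCHarris

open MeasureTheory ProbabilityTheory Filter Set ENNReal

/-- A chain is piecewise Harris on `S` if `S` can be partitioned into measurable, disjoint,
stochastically closed pieces on each of which the restricted chain is Harris recurrent with
respect to some stationary probability distribution supported on that piece. -/
def PiecewiseHarrisOn {X : Type*} [MeasurableSpace X] (P : Kernel X X) (S : Set X) : Prop :=
  ∃ (ι : Type) (C : ι → Set X),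
    (∀ α, MeasurableSet (C α)) ∧
    Pairwise (Function.onFun Disjoint C) ∧
    (⋃ α, C α) = S ∧
    ∀ α, (C α).Nonempty →
      (∀ x ∈ C α, P x (C α) = 1) ∧
      ∃ πα : Measure X, IsProbabilityMeasure πα ∧ πα (C α) = 1 ∧ Stationary P πα ∧
        ∀ A : Set X, MeasurableSet A → 0 < πα A → ∀ x ∈ C α, hitProb P A x = 1

end MCMCHarris


namespace MCMCHarris

variable {X : Type*} [MeasurableSpace X]

instance iterK.instIsMarkovKernel (P : Kernel X X) [IsMarkovKernel P] (n : ℕ) :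
    IsMarkovKernel (iterK P n) := by
  induction n with
  | zero => exact inferInstanceAs (IsMarkovKernel (Kernel.id : Kernel X X))
  | succ n ih => rw [iterK]; exact Kernel.IsMarkovKernel.comp _ _

lemma iterK_zero (P : Kernel X X) : iterK P 0 = Kernel.id := rfl

lemma iterK_succ_apply' (P : Kernel X X) [IsMarkovKernel P] (n : ℕ) (x : X) {A : Set X}
    (hA : MeasurableSet A) : iterK P (n + 1) x A = ∫⁻ y, iterK P n y A ∂P x := by
  rw [iterK]; exact Kernel.comp_apply' _ _ _ hA

lemma iterK_one (P : Kernel X X) [IsMarkovKernel P] : iterK P 1 = P := by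
  show Kernel.id ∘ₖ P = P
  exact Kernel.id_comp P

lemma measurable_hitLE (P : Kernel X X) [IsMarkovKernel P] {A : Set X} (hA : MeasurableSet A) :
    ∀ n, Measurable (hitLE P A n)
  | 0 => measurable_const
  | n + 1 => by
    have ih := measurable_hitLE P hA n
    have hf : Measurable fun y =>
        A.indicator (fun _ => (1 : ℝ≥0∞)) y + Aᶜ.indicator (hitLE P A n) y :=
      (measurable_const.indicator hA).add (ih.indicator hA.compl)
    exact hf.lintegral_kernel

lemma measurable_hitProb (P : Kernel X X) [IsMarkovKernel P] {A : Set X}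
    (hA : MeasurableSet A) : Measurable (hitProb P A) :=
  Measurable.iSup fun n => measurable_hitLE P hA n

lemma hitLE_le_one (P : Kernel X X) [IsMarkovKernel P] (A : Set X) :
    ∀ n x, hitLE P A n x ≤ 1
  | 0, _ => zero_le_one
  | n + 1, x => by
    simp only [hitLE]
    have h : ∀ y, A.indicator (fun _ => (1 : ℝ≥0∞)) y + Aᶜ.indicator (hitLE P A n) y ≤ 1 := by
      intro y
      by_cases hy : y ∈ A
      · simp [Set.indicator_of_mem hy,
          Set.indicator_of_notMem (show y ∉ Aᶜ from fun h => h hy)]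
      · simpa [Set.indicator_of_notMem hy, Set.indicator_of_mem (show y ∈ Aᶜ from hy)]
          using hitLE_le_one P A n y
    calc ∫⁻ y, A.indicator (fun _ => (1 : ℝ≥0∞)) y + Aᶜ.indicator (hitLE P A n) y ∂P x
        ≤ ∫⁻ _, 1 ∂P x := lintegral_mono h
      _ = 1 := by simp

lemma hitLE_le_succ (P : Kernel X X) [IsMarkovKernel P] (A : Set X) :
    ∀ n x, hitLE P A n x ≤ hitLE P A (n + 1) x
  | 0, _ => zero_le
  | n + 1, x => by
    simp only [hitLE]
    refine lintegral_mono fun y => add_le_add le_rfl ?_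
    by_cases hy : y ∈ Aᶜ
    · simpa [Set.indicator_of_mem hy, hitLE] using hitLE_le_succ P A n y
    · simp [Set.indicator_of_notMem hy]

lemma hitLE_mono (P : Kernel X X) [IsMarkovKernel P] (A : Set X) :
    Monotone (fun n => hitLE P A n) :=
  monotone_nat_of_le_succ fun n x => hitLE_le_succ P A n x

lemma hitLE_one_eq (P : Kernel X X) [IsMarkovKernel P] {A : Set X} (hA : MeasurableSet A)
    (x : X) : hitLE P A 1 x = P x A := by
  simp only [hitLE]
  rw [lintegral_congr (g := fun y => A.indicator (fun _ => (1 : ℝ≥0∞)) y)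
    (fun y => by simp)]
  exact lintegral_indicator_one hA

lemma hitProb_eq_zero_iff (P : Kernel X X) {A : Set X} {x : X} :
    hitProb P A x = 0 ↔ ∀ n, hitLE P A n x = 0 := iSup_eq_zero

lemma hitProb_compl_zero (P : Kernel X X) [IsMarkovKernel P] {Cs : Set X}
    (hCm : MeasurableSet Cs) (hclosed : ∀ x ∈ Cs, P x Cs = 1) :
    ∀ x ∈ Cs, hitProb P Csᶜ x = 0 := by
  have key : ∀ n, ∀ x ∈ Cs, hitLE P Csᶜ n x = 0 := by
    intro n
    induction n with
    | zero => intro x hx; rfl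
    | succ n ih =>
      intro x hx
      simp only [hitLE]
      have hc : P x Csᶜ = 0 := by
        have h := measure_compl hCm (measure_ne_top (P x) _)
        rw [hclosed x hx, measure_univ] at h
        simpa using h
      have hae : (fun y => Csᶜ.indicator (fun _ => (1 : ℝ≥0∞)) y
          + Csᶜᶜ.indicator (hitLE P Csᶜ n) y) =ᵐ[P x] (fun _ => 0) := by
        rw [Filter.EventuallyEq, ae_iff]
        refine measure_mono_null (fun y hy => ?_) hc
        simp only [Set.mem_setOf_eq] at hy
        by_contra hmem
        rw [Set.notMem_compl_iff] at hmem
        exact hy (by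
          rw [Set.indicator_of_notMem (show y ∉ Csᶜ from fun h => h hmem),
            Set.indicator_of_mem (show y ∈ Csᶜᶜ by simpa using hmem), ih y hmem, zero_add])
      rw [lintegral_congr_ae hae, lintegral_zero]
  intro x hx
  exact hitProb_eq_zero_iff P |>.mpr fun n => key n x hx

lemma Stationary.lintegral_step (P : Kernel X X) [IsMarkovKernel P] {π : Measure X}
    (h : Stationary P π) {f : X → ℝ≥0∞} (hf : Measurable f) :
    ∫⁻ x, ∫⁻ y, f y ∂P x ∂π = ∫⁻ y, f y ∂π := by
  have hbind : π.bind (fun x => P x) = π := by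
    refine Measure.ext fun A hA => ?_
    rw [Measure.bind_apply hA P.measurable.aemeasurable]
    exact h A hA
  conv_rhs => rw [← hbind]
  rw [Measure.lintegral_bind P.measurable.aemeasurable hf.aemeasurable]

lemma stationary_iterK (P : Kernel X X) [IsMarkovKernel P] {π : Measure X}
    (h : Stationary P π) {A : Set X} (hA : MeasurableSet A) :
    ∀ n, ∫⁻ x, iterK P n x A ∂π = π A
  | 0 => by
    calc ∫⁻ x, iterK P 0 x A ∂π = ∫⁻ x, A.indicator 1 x ∂π := by
          refine lintegral_congr fun x => ?_
          rw [iterK_zero, Kernel.id_apply, Measure.dirac_apply' x hA]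
      _ = π A := lintegral_indicator_one hA
  | n + 1 => by
    have ih := stationary_iterK P h hA n
    calc ∫⁻ x, iterK P (n + 1) x A ∂π = ∫⁻ x, ∫⁻ y, iterK P n y A ∂P x ∂π :=
          lintegral_congr fun x => iterK_succ_apply' P n x hA
      _ = ∫⁻ y, iterK P n y A ∂π := Stationary.lintegral_step P h ((iterK P n).measurable_coe hA)
      _ = π A := ih

lemma hitLE_le_sum (P : Kernel X X) [IsMarkovKernel P] {A : Set X} (hA : MeasurableSet A) :
    ∀ n x, hitLE P A n x ≤ ∑ k ∈ Finset.range n, iterK P (k + 1) x A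
  | 0, x => by simp [hitLE]
  | n + 1, x => by
    simp only [hitLE]
    calc ∫⁻ y, A.indicator (fun _ => (1 : ℝ≥0∞)) y + Aᶜ.indicator (hitLE P A n) y ∂P x
        ≤ ∫⁻ y, A.indicator (fun _ => (1 : ℝ≥0∞)) y
            + (∑ k ∈ Finset.range n, iterK P (k + 1) y A) ∂P x := by
          refine lintegral_mono fun y => add_le_add le_rfl ?_
          exact (Set.indicator_le_self _ _ y).trans (hitLE_le_sum P hA n y)
      _ = P x A + ∑ k ∈ Finset.range n, iterK P (k + 2) x A := by
          rw [lintegral_add_left (measurable_const.indicator hA),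
            lintegral_finset_sum _ (fun k _ => (iterK P (k + 1)).measurable_coe hA)]
          congr 1
          · exact lintegral_indicator_one hA
          · exact Finset.sum_congr rfl fun k _ => (iterK_succ_apply' P (k + 1) x hA).symm
      _ = ∑ k ∈ Finset.range (n + 1), iterK P (k + 1) x A := by
          rw [Finset.sum_range_succ']
          have h1 : iterK P (0 + 1) x A = P x A := by rw [zero_add, iterK_one]
          rw [h1, add_comm]

lemma lintegral_hitProb_eq_zero (P : Kernel X X) [IsMarkovKernel P] {πα : Measure X}
    (h : Stationary P πα) {A : Set X} (hA : MeasurableSet A) (h0 : πα A = 0) :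
    ∫⁻ x, hitProb P A x ∂πα = 0 := by
  have hle : ∀ x, hitProb P A x ≤ ∑' k : ℕ, iterK P (k + 1) x A := fun x =>
    iSup_le fun n => (hitLE_le_sum P hA n x).trans (ENNReal.sum_le_tsum _)
  refine le_antisymm ?_ zero_le
  calc ∫⁻ x, hitProb P A x ∂πα ≤ ∫⁻ x, ∑' k : ℕ, iterK P (k + 1) x A ∂πα :=
        lintegral_mono hle
    _ = ∑' k : ℕ, ∫⁻ x, iterK P (k + 1) x A ∂πα :=
        lintegral_tsum fun k => ((iterK P (k + 1)).measurable_coe hA).aemeasurable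
    _ = ∑' _ : ℕ, (0 : ℝ≥0∞) := by
        refine tsum_congr fun k => ?_
        rw [stationary_iterK P h hA (k + 1), h0]
    _ = 0 := by simp

lemma absorb_step (P : Kernel X X) [IsMarkovKernel P] {A : Set X} (hA : MeasurableSet A)
    {x : X} (hx : hitProb P A x = 0) :
    P x (Aᶜ ∩ {y | hitProb P A y = 0}) = 1 := by
  have hHm : MeasurableSet (Aᶜ ∩ {y | hitProb P A y = 0}) :=
    hA.compl.inter ((measurable_hitProb P hA) (measurableSet_singleton 0))
  have hall : ∀ n, hitLE P A n x = 0 := hitProb_eq_zero_iff P |>.mp hx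
  have haen : ∀ n : ℕ, ∀ᵐ y ∂P x,
      A.indicator (fun _ => (1 : ℝ≥0∞)) y + Aᶜ.indicator (hitLE P A n) y = 0 := by
    intro n
    have h := hall (n + 1)
    simp only [hitLE] at h
    have hmeas : Measurable fun y =>
        A.indicator (fun _ => (1 : ℝ≥0∞)) y + Aᶜ.indicator (hitLE P A n) y :=
      (measurable_const.indicator hA).add ((measurable_hitLE P hA n).indicator hA.compl)
    exact (lintegral_eq_zero_iff hmeas).mp h
  have hae2 : ∀ᵐ y ∂P x, ∀ n : ℕ,
      A.indicator (fun _ => (1 : ℝ≥0∞)) y + Aᶜ.indicator (hitLE P A n) y = 0 :=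
    ae_all_iff.mpr haen
  have haeH : ∀ᵐ y ∂P x, y ∈ Aᶜ ∩ {y | hitProb P A y = 0} := by
    filter_upwards [hae2] with y hy
    have hyA : y ∉ A := by
      intro hmem
      have h0 := hy 0
      rw [Set.indicator_of_mem hmem] at h0
      simp at h0
    refine ⟨hyA, ?_⟩
    have hz : ∀ n, hitLE P A n y = 0 := by
      intro n
      have h := hy n
      rwa [Set.indicator_of_notMem hyA, zero_add,
        Set.indicator_of_mem (show y ∈ Aᶜ from hyA)] at h
    exact hitProb_eq_zero_iff P |>.mpr hz
  have hcompl : P x (Aᶜ ∩ {y | hitProb P A y = 0})ᶜ = 0 := ae_iff.mp haeH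
  have h := measure_add_measure_compl (μ := P x) hHm
  rw [hcompl, add_zero, measure_univ] at h
  exact h

lemma iterK_absorbing (P : Kernel X X) [IsMarkovKernel P] {H : Set X} (hH : MeasurableSet H)
    (habs : ∀ x ∈ H, P x H = 1) : ∀ n, ∀ x ∈ H, iterK P n x H = 1
  | 0, x, hx => by
    rw [iterK_zero, Kernel.id_apply, Measure.dirac_apply' x hH, Set.indicator_of_mem hx]
    rfl
  | n + 1, x, hx => by
    rw [iterK_succ_apply' P n x hH]
    refine le_antisymm ?_ ?_
    · calc ∫⁻ y, iterK P n y H ∂P x ≤ ∫⁻ _, 1 ∂P x :=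
          lintegral_mono fun y => prob_le_one
        _ = 1 := by simp
    · have hcongr : ∫⁻ y in H, iterK P n y H ∂P x = ∫⁻ y in H, 1 ∂P x :=
        setLIntegral_congr_fun hH
          (fun y hy => iterK_absorbing P hH habs n y hy)
      calc (1 : ℝ≥0∞) = P x H := (habs x hx).symm
        _ = ∫⁻ y in H, 1 ∂P x := (setLIntegral_one H).symm
        _ = ∫⁻ y in H, iterK P n y H ∂P x := hcongr.symm
        _ ≤ ∫⁻ y, iterK P n y H ∂P x := setLIntegral_le_lintegral H _

lemma hitLE_le_iterK (P : Kernel X X) [IsMarkovKernel P] {H : Set X} (hH : MeasurableSet H)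
    (habs : ∀ x ∈ H, P x H = 1) : ∀ n x, hitLE P H n x ≤ iterK P n x H
  | 0, _ => zero_le
  | n + 1, x => by
    rw [iterK_succ_apply' P n x hH]
    simp only [hitLE]
    refine lintegral_mono fun y => ?_
    by_cases hy : y ∈ H
    · rw [iterK_absorbing P hH habs n y hy]
      simp [Set.indicator_of_mem hy,
        Set.indicator_of_notMem (show y ∉ Hᶜ from fun h => h hy)]
    · simpa [Set.indicator_of_notMem hy, Set.indicator_of_mem (show y ∈ Hᶜ from hy)]
        using hitLE_le_iterK P hH habs n y

lemma absorbed_null (P : Kernel X X) [IsMarkovKernel P] (π πα : Measure X)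
    [IsProbabilityMeasure π] [IsProbabilityMeasure πα]
    (hstat : Stationary P π) (hstatα : Stationary P πα)
    (hHarris : ∀ B : Set X, MeasurableSet B → 0 < πα B → ∀ x, hitProb P B x = 1)
    {A : Set X} (hA : MeasurableSet A) (h0 : πα A = 0) : π A = 0 := by
  set H := Aᶜ ∩ {y | hitProb P A y = 0} with hHdef
  have hHm : MeasurableSet H :=
    hA.compl.inter ((measurable_hitProb P hA) (measurableSet_singleton 0))
  have hint : ∫⁻ x, hitProb P A x ∂πα = 0 := lintegral_hitProb_eq_zero P hstatα hA h0
  have hae : ∀ᵐ x ∂πα, hitProb P A x = 0 :=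
    (lintegral_eq_zero_iff (measurable_hitProb P hA)).mp hint
  have hnull : πα {y | hitProb P A y = 0}ᶜ = 0 := ae_iff.mp hae
  have hαH : 0 < πα H := by
    have hcle : πα Hᶜ ≤ πα A + πα {y | hitProb P A y = 0}ᶜ := by
      rw [hHdef, Set.compl_inter, compl_compl]
      exact measure_union_le _ _
    rw [h0, hnull, add_zero] at hcle
    have hcz : πα Hᶜ = 0 := le_antisymm hcle zero_le
    have h := measure_add_measure_compl (μ := πα) hHm
    rw [hcz, add_zero, measure_univ] at h
    rw [h]; exact one_pos
  have habs : ∀ x ∈ H, P x H = 1 := fun x hx => absorb_step P hA hx.2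
  have hhit : ∀ x, hitProb P H x = 1 := fun x => hHarris H hHm hαH x
  have hkey : ∀ n, π A + ∫⁻ x, hitLE P H n x ∂π ≤ 1 := by
    intro n
    have hAsub : A ⊆ Hᶜ := fun y hy hyH => hyH.1 hy
    have hpt : ∀ x, iterK P n x A + hitLE P H n x ≤ 1 := by
      intro x
      calc iterK P n x A + hitLE P H n x ≤ iterK P n x Hᶜ + iterK P n x H :=
            add_le_add (measure_mono hAsub) (hitLE_le_iterK P hHm habs n x)
        _ = 1 := by rw [add_comm, measure_add_measure_compl hHm, measure_univ]
    have hint2 : ∫⁻ x, iterK P n x A + hitLE P H n x ∂π ≤ 1 := by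
      calc ∫⁻ x, iterK P n x A + hitLE P H n x ∂π ≤ ∫⁻ _, 1 ∂π := lintegral_mono hpt
        _ = 1 := by simp
    rw [lintegral_add_left ((iterK P n).measurable_coe hA)] at hint2
    rwa [stationary_iterK P hstat hA n] at hint2
  have hsup : (⨆ n, ∫⁻ x, hitLE P H n x ∂π) = 1 := by
    rw [← lintegral_iSup (fun n => measurable_hitLE P hHm n) (hitLE_mono P H)]
    calc ∫⁻ x, ⨆ n, hitLE P H n x ∂π = ∫⁻ _, 1 ∂π := lintegral_congr fun x => hhit x
      _ = 1 := by simp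
  have hfinal : π A + 1 ≤ 1 := by
    conv_lhs => rw [← hsup]
    rw [ENNReal.add_iSup]
    exact iSup_le hkey
  have : π A + 1 ≤ 0 + 1 := by rwa [zero_add]
  have hz : π A ≤ 0 := (ENNReal.add_le_add_iff_right one_ne_top).mp this
  exact le_antisymm hz zero_le

end MCMCHarris

open MCMCHarris MeasureTheory ProbabilityTheory Filter Set ENNReal

/-- Proposition 15. If a Markov chain with stationary probability
distribution `π` is piecewise Harris — witnessed by a partition `C` of the state space into
measurable, disjoint, stochastically closed pieces on which the restricted chains are Harris
recurrent — and is also ϕ-irreducible, then it is Harris recurrent; moreover every nonempty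
piece of the partition is the whole state space. -/
theorem prop15_piecewise_harris_irreducible {X : Type*} [MeasurableSpace X]
    (P : Kernel X X) [IsMarkovKernel P] (π : Measure X) [IsProbabilityMeasure π]
    (hstat : Stationary P π)
    (hirr : PhiIrreducibleOn P Set.univ)
    (ι : Type) (C : ι → Set X)
    (hCmeas : ∀ α, MeasurableSet (C α))
    (hCdisj : Pairwise (Function.onFun Disjoint C))
    (hCcover : (⋃ α, C α) = Set.univ)
    (hCpieces : ∀ α, (C α).Nonempty →
      (∀ x ∈ C α, P x (C α) = 1) ∧
      ∃ πα : Measure X, IsProbabilityMeasure πα ∧ πα (C α) = 1 ∧ Stationary P πα ∧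
        ∀ A : Set X, MeasurableSet A → 0 < πα A → ∀ x ∈ C α, hitProb P A x = 1) :
    HarrisRecurrentOn P π Set.univ ∧ ∀ α, (C α).Nonempty → C α = Set.univ := by
  obtain ⟨φ, hφsf, hφne, hφirr⟩ := hirr
  have htrap : ∀ α, (C α).Nonempty → φ ((C α)ᶜ) = 0 := by
    intro α hne
    obtain ⟨hclosed, -⟩ := hCpieces α hne
    obtain ⟨x, hx⟩ := hne
    by_contra h
    have hpos : 0 < φ ((C α)ᶜ) := pos_iff_ne_zero.mpr h
    have hirr' := hφirr x (Set.mem_univ x) ((C α)ᶜ) (hCmeas α).compl hpos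
    rw [hitProb_compl_zero P (hCmeas α) hclosed x hx] at hirr'
    exact lt_irrefl 0 hirr'
  have huniq : ∀ α β, (C α).Nonempty → (C β).Nonempty → α = β := by
    intro α β hα hβ
    by_contra hne
    have hdisj : Disjoint (C α) (C β) := hCdisj hne
    have hsub : C β ⊆ (C α)ᶜ := Set.subset_compl_iff_disjoint_left.mpr hdisj
    have hφβ : φ (C β) = 0 := measure_mono_null hsub (htrap α hα)
    have hφuniv : φ Set.univ = 0 := by
      have hle : φ Set.univ ≤ φ (C β) + φ ((C β)ᶜ) := by
        rw [← Set.union_compl_self (C β)]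
        exact measure_union_le _ _
      rw [hφβ, htrap β hβ, add_zero] at hle
      exact le_antisymm hle zero_le
    exact hφne (Measure.measure_univ_eq_zero.mp hφuniv)
  have hpiece : ∀ α, (C α).Nonempty → C α = Set.univ := by
    intro α hα
    refine Set.eq_univ_of_forall fun y => ?_
    have hy : y ∈ ⋃ β, C β := hCcover ▸ Set.mem_univ y
    obtain ⟨β, hyβ⟩ := Set.mem_iUnion.mp hy
    rwa [huniq α β hα ⟨y, hyβ⟩]
  refine ⟨?_, hpiece⟩
  intro A hA hπA x _
  have hx : x ∈ ⋃ β, C β := hCcover ▸ Set.mem_univ x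
  obtain ⟨α, hxα⟩ := Set.mem_iUnion.mp hx
  have hαne : (C α).Nonempty := ⟨x, hxα⟩
  obtain ⟨hclosed, πα, hprob, hsupp, hstatα, hHarrisα⟩ := hCpieces α hαne
  have hCuniv := hpiece α hαne
  have hHarris' : ∀ B : Set X, MeasurableSet B → 0 < πα B → ∀ z, hitProb P B z = 1 := by
    intro B hB hBpos z
    exact hHarrisα B hB hBpos z (hCuniv ▸ Set.mem_univ z)
  haveI := hprob
  have hαA : 0 < πα A := by
    rcases eq_or_lt_of_le ((show 0 ≤ πα A from zero_le)) with h | h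
    · exfalso
      have := absorbed_null P π πα hstat hstatα hHarris' hA h.symm
      rw [this] at hπA
      exact lt_irrefl 0 hπA
    · exact h
  exact hHarris' A hA hαA x
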